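/- Let x ∈ Δ_d↓ and ε > 0, and let B be any nonempty subset of B^∞_ε(x). Then the majorization infimum x^inf of B, defined componentwise by x^inf_k = inf{s_k(x') : x' ∈ B} − inf{s_{k−1}(x') : x' ∈ B}, satisfies ‖x^inf − x‖_∞ ≤ ε. -/

import Mathlib

open Finset

/-- Partial sum of the first `k` components of `x`. -/
def psum (d : ℕ) (x : Fin d → ℝ) (k : ℕ) : ℝ :=
  ∑ i ∈ Finset.univ.filter (fun i : Fin d => (i : ℕ) < k), x i

/-- The ordered probability simplex `Δ_d↓`. -/
def Simplex (d : ℕ) (x : Fin d → ℝ) : Prop :=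
  (∀ i j : Fin d, i ≤ j → x j ≤ x i) ∧ (∀ i, 0 ≤ x i) ∧ ∑ i, x i = 1

/-- Majorization: all partial sums of `x` dominate those of `y`. -/
def Maj (d : ℕ) (x y : Fin d → ℝ) : Prop :=
  ∀ k : ℕ, psum d y k ≤ psum d x k

/-- ℓ∞ distance. -/
noncomputable def dInf (d : ℕ) (x y : Fin d → ℝ) : ℝ := ⨆ i, |x i - y i|

/-- ℓ¹ distance. -/
def dOne (d : ℕ) (x y : Fin d → ℝ) : ℝ := ∑ i, |x i - y i|

lemma psum_succ (d : ℕ) (b : Fin d → ℝ) (k : ℕ) (hk : k < d) :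
    psum d b (k + 1) = psum d b k + b ⟨k, hk⟩ := by
  unfold psum
  have hset : Finset.univ.filter (fun i : Fin d => (i : ℕ) < k + 1)
      = insert ⟨k, hk⟩ (Finset.univ.filter (fun i : Fin d => (i : ℕ) < k)) := by
    ext j
    simp [Nat.lt_succ_iff_lt_or_eq, Fin.ext_iff]; constructor <;> intro h <;> omega
  rw [hset, Finset.sum_insert (by simp)]
  ring

lemma psum_nonneg (d : ℕ) (b : Fin d → ℝ) (hb : ∀ i, 0 ≤ b i) (k : ℕ) :
    0 ≤ psum d b k :=
  Finset.sum_nonneg (fun i _ => hb i)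

theorem inf_of_subset_in_linf_ball (d : ℕ) (hd : 0 < d) (x : Fin d → ℝ)
    (hx : Simplex d x) (ε : ℝ) (hε : 0 < ε)
    (B : Set (Fin d → ℝ)) (hBne : B.Nonempty)
    (hB : ∀ b ∈ B, Simplex d b ∧ dInf d b x ≤ ε) :
    ∀ i : Fin d,
      |(sInf {s : ℝ | ∃ b ∈ B, s = psum d b ((i : ℕ) + 1)} -
        sInf {s : ℝ | ∃ b ∈ B, s = psum d b (i : ℕ)}) - x i| ≤ ε := by
  intro i
  set A := {s : ℝ | ∃ b ∈ B, s = psum d b ((i : ℕ) + 1)} with hA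
  set C := {s : ℝ | ∃ b ∈ B, s = psum d b (i : ℕ)} with hC
  have hcomp : ∀ b ∈ B, |b i - x i| ≤ ε := by
    intro b hb
    have h1 : |b i - x i| ≤ dInf d b x := by
      exact le_ciSup (Set.Finite.bddAbove (Set.finite_range (fun j => |b j - x j|))) i
    exact h1.trans (hB b hb).2
  have hAne : A.Nonempty := by
    obtain ⟨b, hb⟩ := hBne
    exact ⟨psum d b ((i : ℕ) + 1), b, hb, rfl⟩
  have hCne : C.Nonempty := by
    obtain ⟨b, hb⟩ := hBne
    exact ⟨psum d b (i : ℕ), b, hb, rfl⟩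
  have hAbdd : BddBelow A := by
    refine ⟨0, ?_⟩
    rintro s ⟨b, hb, rfl⟩
    exact psum_nonneg d b (hB b hb).1.2.1 _
  have hCbdd : BddBelow C := by
    refine ⟨0, ?_⟩
    rintro s ⟨b, hb, rfl⟩
    exact psum_nonneg d b (hB b hb).1.2.1 _
  rw [abs_le]
  constructor
  · -- -ε ≤ sInf A - sInf C - x i, i.e. sInf C ≤ sInf A - x i + ε
    have : sInf C ≤ sInf A - x i + ε := by
      have h : sInf C - ε + x i ≤ sInf A := by
        apply le_csInf hAne
        rintro s ⟨b, hb, rfl⟩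
        have h1 : sInf C ≤ psum d b (i : ℕ) := csInf_le hCbdd ⟨b, hb, rfl⟩
        have h2 : psum d b ((i : ℕ) + 1) = psum d b (i : ℕ) + b i := by
          have := psum_succ d b (i : ℕ) i.isLt
          simpa using this
        have h3 : x i - ε ≤ b i := by
          have := hcomp b hb
          rw [abs_le] at this
          linarith [this.1]
        linarith
      linarith
    linarith
  · -- sInf A - sInf C - x i ≤ ε, i.e. sInf A - x i - ε ≤ sInf C
    have h : sInf A - x i - ε ≤ sInf C := by
      apply le_csInf hCne
      rintro s ⟨b, hb, rfl⟩
      have h1 : sInf A ≤ psum d b ((i : ℕ) + 1) := csInf_le hAbdd ⟨b, hb, rfl⟩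
      have h2 : psum d b ((i : ℕ) + 1) = psum d b (i : ℕ) + b i := by
        have := psum_succ d b (i : ℕ) i.isLt
        simpa using this
      have h3 : b i ≤ x i + ε := by
        have := hcomp b hb
        rw [abs_le] at this
        linarith [this.2]
      linarith
    linarith
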